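/- Let q, ρ, y be real numbers and let μ be a probability measure on ℝ with finite moments of all orders such that ∫ H_n(x|q) dμ(x) = ρ^n·H_n(y|q) for all n ≥ 1. Then, with a = ρ·y and b = ρ², the Al-Salam–Chihara polynomials satisfy ∫ p_n(x|q,a,b) dμ(x) = 0 for all n ≥ 1. -/

import Mathlib

open MeasureTheory Finset

noncomputable section

/-- The `q`-integer `[n]_q = 1 + q + ⋯ + q^{n-1}`. -/
def qInt (q : ℝ) (n : ℕ) : ℝ := ∑ i ∈ Finset.range n, q ^ i

/-- The (renormalized) continuous `q`-Hermite polynomials, as functions: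
`H_{-1} = 0`, `H_0 = 1`, `H_{n+1}(x) = x H_n(x) - [n]_q H_{n-1}(x)`. -/
def qHermite (q : ℝ) : ℕ → ℝ → ℝ
  | 0 => fun _ => 1
  | 1 => fun x => x
  | n + 2 => fun x => x * qHermite q (n + 1) x - qInt q (n + 1) * qHermite q n x

/-- The renormalized Al-Salam–Chihara polynomials, as functions:
`p_{-1} = 0`, `p_0 = 1`,
`p_{n+1}(x) = (x - a q^n) p_n(x) - (1 - b q^{n-1}) [n]_q p_{n-1}(x)`. -/
def asc (q a b : ℝ) : ℕ → ℝ → ℝ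
  | 0 => fun _ => 1
  | 1 => fun x => x - a
  | n + 2 => fun x => (x - a * q ^ (n + 1)) * asc q a b (n + 1) x
      - (1 - b * q ^ n) * qInt q (n + 1) * asc q a b n x

/-- Theorem 2 (first part): if a probability measure `μ` on `ℝ` with all moments finite
satisfies `∫ H_n(x|q) dμ(x) = ρ^n H_n(y|q)` for all `n ≥ 1`, then with `a = ρ y`,
`b = ρ²`, the Al-Salam–Chihara polynomials satisfy `∫ p_n(x|q,a,b) dμ(x) = 0` for all
`n ≥ 1`. -/
def qb (q : ℝ) : ℕ → ℕ → ℝ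
  | _, 0 => 1
  | 0, _+1 => 0
  | n+1, k+1 => qb q n k + q^(k+1) * qb q n (k+1)

lemma qb_zero_right (q : ℝ) (n : ℕ) : qb q n 0 = 1 := by cases n <;> rfl

lemma qb_succ (q : ℝ) (n k : ℕ) :
    qb q (n+1) (k+1) = qb q n k + q^(k+1) * qb q n (k+1) := rfl

lemma qb_eq_zero (q : ℝ) : ∀ n k, n < k → qb q n k = 0 := by
  intro n
  induction n with
  | zero => intro k hk; match k, hk with | k+1, _ => rfl
  | succ n ih =>
    intro k hk
    match k, hk with
    | k+1, hk =>
      rw [qb_succ, ih k (by omega), ih (k+1) (by omega)]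
      ring

lemma qb_self (q : ℝ) : ∀ n, qb q n n = 1 := by
  intro n
  induction n with
  | zero => rfl
  | succ n ih => rw [qb_succ, ih, qb_eq_zero q n (n+1) (by omega)]; ring

lemma qInt_zero (q : ℝ) : qInt q 0 = 0 := by simp [qInt]

lemma qInt_one (q : ℝ) : qInt q 1 = 1 := by simp [qInt]

lemma qInt_succ (q : ℝ) (n : ℕ) : qInt q (n+1) = qInt q n + q^n := by
  simp [qInt, Finset.sum_range_succ]

lemma qInt_add (q : ℝ) (s t : ℕ) : qInt q (s+t) = qInt q s + q^s * qInt q t := by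
  induction t with
  | zero => simp [qInt_zero]
  | succ t ih =>
    rw [show s + (t+1) = (s+t)+1 from rfl, qInt_succ, ih, qInt_succ, pow_add]
    ring

lemma qbB (q : ℝ) : ∀ n k, qInt q (n - k) * qb q n k = qInt q (k+1) * qb q n (k+1) := by
  intro n
  induction n with
  | zero =>
    intro k
    cases k with
    | zero => simp [qInt_zero, qb_eq_zero q 0 1 (by omega)]
    | succ k => simp [qb_eq_zero q 0 (k+1) (by omega), qb_eq_zero q 0 (k+2) (by omega)]
  | succ n ih =>
    intro k
    cases k with
    | zero =>
      have h1 := ih 0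
      norm_num [Nat.sub_zero, qb_zero_right, qb_succ, qInt_one, pow_one] at h1 ⊢
      have e : qInt q (n+1) = 1 + q * qInt q n := by
        rw [show n+1 = 1+n from by omega, qInt_add, qInt_one, pow_one]
      linear_combination e + q * h1
    | succ k =>
      have h1 := ih k
      have h2 := ih (k+1)
      rw [show (n+1) - (k+1) = n - k from by omega, qb_succ, qb_succ]
      by_cases hk : k < n
      · -- n - k = (n-k-1)+1 ≥ 1
        obtain ⟨d, hd⟩ : ∃ d, n - k = d + 1 := ⟨n - k - 1, by omega⟩
        have hd2 : n - (k+1) = d := by omega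
        rw [hd] at h1 ⊢
        rw [hd2] at h2
        have e1 : qInt q (d+1) = 1 + q * qInt q d := by
          rw [show d+1 = 1+d from by omega, qInt_add, qInt_one, pow_one]
        have e2 : qInt q (k+2) = qInt q (k+1) + q^(k+1) := qInt_succ q (k+1)
        linear_combination h1 + q^(k+1) * qb q n (k+1) * e1 - qb q n (k+1) * e2 + q^(k+2) * h2
      · have hz : qb q n (k+1) = 0 := qb_eq_zero q n (k+1) (by omega)
        have hz2 : qb q n (k+2) = 0 := qb_eq_zero q n (k+2) (by omega)
        rw [show n - k = 0 from by omega, qInt_zero, hz, hz2]; ring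

lemma qbA (q : ℝ) (n k : ℕ) :
    qInt q (k+1) * qb q (n+1) (k+1) = qInt q (n+1) * qb q n k := by
  rw [qb_succ]
  by_cases hk : k ≤ n
  · have hB := (qbB q n k).symm
    have hadd : qInt q (n+1) = qInt q (k+1) + q^(k+1) * qInt q (n-k) := by
      rw [show n+1 = (k+1) + (n-k) from by omega, qInt_add]
    linear_combination q^(k+1) * hB - qb q n k * hadd
  · rw [qb_eq_zero q n k (by omega), qb_eq_zero q n (k+1) (by omega)]; ring

lemma hrec (q y : ℝ) : ∀ m, qHermite q (m+1) y
    = y * qHermite q m y - qInt q m * qHermite q (m-1) y := by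
  intro m
  match m with
  | 0 => simp [qHermite, qInt_zero]
  | s+1 => rfl

lemma xasc (q a b : ℝ) (k : ℕ) (x : ℝ) :
    x * asc q a b k x = asc q a b (k+1) x + a * q^k * asc q a b k x
      + (1 - b * q^(k-1)) * qInt q k * asc q a b (k-1) x := by
  match k with
  | 0 => simp [asc, qInt_zero]
  | s+1 =>
    show x * asc q a b (s+1) x = asc q a b (s+2) x + _ + _
    rw [show asc q a b (s+2) = fun x => (x - a * q ^ (s + 1)) * asc q a b (s + 1) x
      - (1 - b * q ^ s) * qInt q (s + 1) * asc q a b s x from rfl]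
    show _ = _ + a * q^(s+1) * asc q a b (s+1) x + (1 - b*q^(s+1-1)) * qInt q (s+1) * asc q a b (s+1-1) x
    rw [show s+1-1 = s from rfl]
    ring

def Cc (q ρ y : ℝ) (n k : ℕ) : ℝ := qb q n k * ρ^(n-k) * qHermite q (n-k) y

lemma R0 (q ρ y a b : ℝ) (ha : a = ρ * y) (hb : b = ρ^2) (n : ℕ) :
    Cc q ρ y (n+2) 0 = a * Cc q ρ y (n+1) 0
      + (1 - b * q^0) * qInt q 1 * Cc q ρ y (n+1) 1
      - qInt q (n+1) * Cc q ρ y n 0 := by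
  subst ha hb
  have hq1 : qb q (n+1) 1 = qInt q (n+1) := by
    have := qbB q (n+1) 0
    rw [qb_zero_right, qInt_one, Nat.sub_zero] at this
    linarith
  simp only [Cc, qb_zero_right, Nat.sub_zero, hq1, qInt_one,
    show (n+1) - 1 = n from rfl]
  rw [hrec q y (n+1)]
  simp only [Nat.add_sub_cancel]
  ring

lemma Rj (q ρ y a b : ℝ) (ha : a = ρ * y) (hb : b = ρ^2) (n k : ℕ) :
    Cc q ρ y (n+2) (k+1) = Cc q ρ y (n+1) k
      + a * q^(k+1) * Cc q ρ y (n+1) (k+1)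
      + (1 - b * q^(k+1)) * qInt q (k+2) * Cc q ρ y (n+1) (k+2)
      - qInt q (n+1) * Cc q ρ y n (k+1) := by
  subst ha hb
  rcases lt_or_ge k n with hk | hk
  · -- k < n : write n = k + t + 1
    obtain ⟨t, rfl⟩ : ∃ t, n = k + t + 1 := ⟨n - k - 1, by omega⟩
    simp only [Cc,
      show (k+t+1+2) - (k+1) = t+2 from by omega,
      show (k+t+1+1) - k = t+2 from by omega,
      show (k+t+1+1) - (k+1) = t+1 from by omega,
      show (k+t+1+1) - (k+2) = t from by omega,
      show (k+t+1) - (k+1) = t from by omega]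
    have hP : qb q (k+t+1+2) (k+1) = qb q (k+t+1+1) k + q^(k+1) * qb q (k+t+1+1) (k+1) :=
      qb_succ q (k+t+1+1) k
    have hA : qInt q (k+2) * qb q (k+t+1+1) (k+2) = qInt q (k+t+1+1) * qb q (k+t+1) (k+1) := by
      have := qbA q (k+t+1) (k+1)
      linear_combination this
    have hB' : qInt q (t+1) * qb q (k+t+1+1) (k+1) = qInt q (k+2) * qb q (k+t+1+1) (k+2) := by
      have := qbB q (k+t+1+1) (k+1)
      rw [show (k+t+1+1) - (k+1) = t+1 from by omega] at this
      linear_combination this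
    have hH : qHermite q (t+2) y = y * qHermite q (t+1) y - qInt q (t+1) * qHermite q t y := by
      rw [hrec q y (t+1)]
      simp only [Nat.add_sub_cancel]
    linear_combination (ρ^(t+2) * qHermite q (t+2) y) * hP
      + (q^(k+1) * qb q (k+t+1+1) (k+1) * ρ^(t+2)) * hH
      - (q^(k+1) * ρ^(t+2) * qHermite q t y) * hB'
      - (ρ^t * qHermite q t y) * hA
  · by_cases h1 : k = n
    · subst h1
      simp only [Cc,
        show (k+2) - (k+1) = 1 from by omega,
        show (k+1) - k = 1 from by omega,
        show (k+1) - (k+1) = 0 from by omega,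
        show k - (k+1) = 0 from by omega,
        qb_eq_zero q (k+1) (k+2) (by omega),
        qb_eq_zero q k (k+1) (by omega),
        show qHermite q 1 y = y from rfl,
        show qHermite q 0 y = 1 from rfl, pow_zero, pow_one]
      rw [qb_succ q (k+1) k, qb_self]
      ring
    · by_cases h2 : k = n+1
      · subst h2
        simp only [Cc, Nat.sub_self,
          show (n+2) - (n+2) = 0 from by omega,
          show (n+1) - (n+1) = 0 from by omega,
          qb_self,
          qb_eq_zero q (n+1) (n+2) (by omega),
          qb_eq_zero q (n+1) (n+3) (by omega),
          qb_eq_zero q n (n+2) (by omega),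
          show qHermite q 0 y = 1 from rfl, pow_zero]
        ring
      · simp only [Cc, qb_eq_zero q (n+2) (k+1) (by omega), qb_eq_zero q (n+1) k (by omega),
          qb_eq_zero q (n+1) (k+1) (by omega), qb_eq_zero q (n+1) (k+2) (by omega),
          qb_eq_zero q n (k+1) (by omega)]
        ring

lemma Cz (q ρ y : ℝ) (m k : ℕ) (h : m < k) : Cc q ρ y m k = 0 := by
  simp [Cc, qb_eq_zero q m k h]

lemma sum_shift (f : ℕ → ℝ) (m : ℕ) :
    ∑ k ∈ Finset.range (m+1), f (k+1) = (∑ k ∈ Finset.range (m+1), f k) + f (m+1) - f 0 := by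
  have h1 := Finset.sum_range_succ' f (m+1)
  have h2 := Finset.sum_range_succ f (m+1)
  linarith

lemma conn (q ρ y a b : ℝ) (ha : a = ρ * y) (hb : b = ρ^2) :
    ∀ n, ∀ x : ℝ, qHermite q n x = ∑ k ∈ Finset.range (n+1), Cc q ρ y n k * asc q a b k x := by
  intro n
  induction n using Nat.strong_induction_on with
  | _ n ih =>
    match n with
    | 0 =>
      intro x
      simp [Cc, qHermite, asc, qb_zero_right]
    | 1 =>
      intro x
      rw [Finset.sum_range_succ, Finset.sum_range_one]
      simp only [Cc, qb_zero_right, qb_self, Nat.sub_zero, Nat.sub_self]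
      show x = 1 * ρ^1 * qHermite q 1 y * 1 + 1 * ρ^0 * 1 * (x - a)
      rw [show qHermite q 1 y = y from rfl, ha]
      ring
    | n+2 =>
      intro x
      have IH1 := ih (n+1) (by omega) x
      have IH0 := ih n (by omega) x
      rw [show qHermite q (n+2) x
        = x * qHermite q (n+1) x - qInt q (n+1) * qHermite q n x from rfl, IH1, IH0]
      have hp0 : asc q a b 0 x = 1 := rfl
      have hS1 : x * ∑ k ∈ Finset.range (n+2), Cc q ρ y (n+1) k * asc q a b k x
          = (∑ k ∈ Finset.range (n+2), Cc q ρ y (n+1) k * asc q a b (k+1) x)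
          + (∑ k ∈ Finset.range (n+2), a * q^k * Cc q ρ y (n+1) k * asc q a b k x)
          + (∑ k ∈ Finset.range (n+2),
              (1 - b*q^(k-1)) * qInt q k * Cc q ρ y (n+1) k * asc q a b (k-1) x) := by
        rw [Finset.mul_sum, ← Finset.sum_add_distrib, ← Finset.sum_add_distrib]
        refine Finset.sum_congr rfl fun k _ => ?_
        linear_combination Cc q ρ y (n+1) k * xasc q a b k x
      have hS3 : ∑ k ∈ Finset.range (n+2),
            (1 - b*q^(k-1)) * qInt q k * Cc q ρ y (n+1) k * asc q a b (k-1) x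
          = ∑ k ∈ Finset.range (n+1),
            (1 - b*q^k) * qInt q (k+1) * Cc q ρ y (n+1) (k+1) * asc q a b k x := by
        rw [Finset.sum_range_succ' (fun k =>
          (1 - b*q^(k-1)) * qInt q k * Cc q ρ y (n+1) k * asc q a b (k-1) x) (n+1)]
        simp only [Nat.add_sub_cancel, qInt_zero, mul_zero, zero_mul, add_zero]
      have hT : ∑ k ∈ Finset.range (n+2+1), Cc q ρ y (n+2) k * asc q a b k x
          = (∑ k ∈ Finset.range (n+2), Cc q ρ y (n+2) (k+1) * asc q a b (k+1) x)
            + Cc q ρ y (n+2) 0 := by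
        have h := Finset.sum_range_succ' (fun k => Cc q ρ y (n+2) k * asc q a b k x) (n+2)
        rw [h, hp0, mul_one]
      have hTsplit : ∑ k ∈ Finset.range (n+2), Cc q ρ y (n+2) (k+1) * asc q a b (k+1) x
          = (∑ k ∈ Finset.range (n+2), Cc q ρ y (n+1) k * asc q a b (k+1) x)
          + (∑ k ∈ Finset.range (n+2), a*q^(k+1)*Cc q ρ y (n+1) (k+1) * asc q a b (k+1) x)
          + (∑ k ∈ Finset.range (n+2),
              (1 - b*q^(k+1)) * qInt q (k+2) * Cc q ρ y (n+1) (k+2) * asc q a b (k+1) x)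
          - (∑ k ∈ Finset.range (n+2), qInt q (n+1) * Cc q ρ y n (k+1) * asc q a b (k+1) x) := by
        rw [← Finset.sum_add_distrib, ← Finset.sum_add_distrib, ← Finset.sum_sub_distrib]
        refine Finset.sum_congr rfl fun k _ => ?_
        linear_combination (asc q a b (k+1) x) * Rj q ρ y a b ha hb n k
      have hA2 : ∑ k ∈ Finset.range (n+2), a*q^(k+1)*Cc q ρ y (n+1) (k+1) * asc q a b (k+1) x
          = (∑ k ∈ Finset.range (n+2), a * q^k * Cc q ρ y (n+1) k * asc q a b k x)
            - a * Cc q ρ y (n+1) 0 := by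
        have h := sum_shift (fun k => a * q^k * Cc q ρ y (n+1) k * asc q a b k x) (n+1)
        rw [h, Cz q ρ y (n+1) (n+2) (by omega), hp0]
        ring
      have hA3 : ∑ k ∈ Finset.range (n+2),
            (1 - b*q^(k+1)) * qInt q (k+2) * Cc q ρ y (n+1) (k+2) * asc q a b (k+1) x
          = (∑ k ∈ Finset.range (n+1),
              (1 - b*q^k) * qInt q (k+1) * Cc q ρ y (n+1) (k+1) * asc q a b k x)
            - (1 - b * q^0) * qInt q 1 * Cc q ρ y (n+1) 1 := by
        have h := sum_shift (fun k =>
          (1 - b*q^k) * qInt q (k+1) * Cc q ρ y (n+1) (k+1) * asc q a b k x) (n+1)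
        rw [h, Finset.sum_range_succ (fun k =>
          (1 - b*q^k) * qInt q (k+1) * Cc q ρ y (n+1) (k+1) * asc q a b k x) (n+1),
          Cz q ρ y (n+1) (n+2) (by omega), Cz q ρ y (n+1) (n+3) (by omega), hp0]
        ring
      have hA4 : ∑ k ∈ Finset.range (n+2), qInt q (n+1) * Cc q ρ y n (k+1) * asc q a b (k+1) x
          = qInt q (n+1) * (∑ k ∈ Finset.range (n+1), Cc q ρ y n k * asc q a b k x)
            - qInt q (n+1) * Cc q ρ y n 0 := by
        have h := sum_shift (fun k => qInt q (n+1) * Cc q ρ y n k * asc q a b k x) (n+1)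
        rw [h, Finset.sum_range_succ (fun k =>
          qInt q (n+1) * Cc q ρ y n k * asc q a b k x) (n+1),
          Cz q ρ y n (n+1) (by omega), Cz q ρ y n (n+2) (by omega), hp0,
          Finset.mul_sum]
        simp only [mul_assoc]
        ring
      have hR0 := R0 q ρ y a b ha hb n
      linarith [hS1, hS3, hT, hTsplit, hA2, hA3, hA4, hR0]

lemma asc_poly (q a b : ℝ) : ∀ n, ∃ P : Polynomial ℝ, ∀ x, asc q a b n x = Polynomial.eval x P := by
  intro n
  induction n using Nat.strong_induction_on with
  | _ n ih =>
    match n with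
    | 0 => exact ⟨1, by simp [asc]⟩
    | 1 => exact ⟨Polynomial.X - Polynomial.C a, by intro x; simp [asc]⟩
    | n+2 =>
      obtain ⟨P1, h1⟩ := ih (n+1) (by omega)
      obtain ⟨P0, h0⟩ := ih n (by omega)
      refine ⟨(Polynomial.X - Polynomial.C (a*q^(n+1))) * P1
        - Polynomial.C ((1 - b*q^n) * qInt q (n+1)) * P0, fun x => ?_⟩
      rw [show asc q a b (n+2) x = (x - a * q ^ (n + 1)) * asc q a b (n + 1) x
        - (1 - b * q ^ n) * qInt q (n + 1) * asc q a b n x from rfl, h1 x, h0 x]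
      simp

lemma integrable_asc (q a b : ℝ) (μ : MeasureTheory.Measure ℝ)
    (hmom : ∀ n : ℕ, MeasureTheory.Integrable (fun x => x ^ n) μ) (k : ℕ) :
    MeasureTheory.Integrable (fun x => asc q a b k x) μ := by
  obtain ⟨P, hP⟩ := asc_poly q a b k
  have : (fun x => asc q a b k x) = fun x =>
      ∑ i ∈ Finset.range (P.natDegree + 1), P.coeff i * x ^ i := by
    funext x
    rw [hP x, Polynomial.eval_eq_sum_range]
  rw [this]
  exact MeasureTheory.integrable_finset_sum _ fun i _ => (hmom i).const_mul _


theorem integral_asc_eq_zero (q ρ y : ℝ) (μ : Measure ℝ) [IsProbabilityMeasure μ]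
    (hmom : ∀ n : ℕ, Integrable (fun x => x ^ n) μ)
    (hH : ∀ n : ℕ, 1 ≤ n → ∫ x, qHermite q n x ∂μ = ρ ^ n * qHermite q n y)
    (a b : ℝ) (ha : a = ρ * y) (hb : b = ρ ^ 2)
    (n : ℕ) (hn : 1 ≤ n) :
    ∫ x, asc q a b n x ∂μ = 0 := by
  induction n using Nat.strong_induction_on with
  | _ n ih =>
    match n, hn with
    | m+1, _ =>
      have hc := conn q ρ y a b ha hb (m+1)
      have key : ∫ x, qHermite q (m+1) x ∂μ
          = ∑ k ∈ Finset.range (m+2), Cc q ρ y (m+1) k * ∫ x, asc q a b k x ∂μ := by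
        have e1 : ∫ x, qHermite q (m+1) x ∂μ
            = ∫ x, ∑ k ∈ Finset.range (m+2), Cc q ρ y (m+1) k * asc q a b k x ∂μ := by
          refine MeasureTheory.integral_congr_ae (Filter.Eventually.of_forall fun x => ?_)
          exact hc x
        rw [e1, MeasureTheory.integral_finset_sum _
          (fun k _ => (integrable_asc q a b μ hmom k).const_mul _)]
        refine Finset.sum_congr rfl fun k _ => ?_
        rw [MeasureTheory.integral_const_mul]
      rw [hH (m+1) (by omega)] at key
      rw [Finset.sum_range_succ' (fun k => Cc q ρ y (m+1) k * ∫ x, asc q a b k x ∂μ) (m+1)] at key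
      have h0 : Cc q ρ y (m+1) 0 * ∫ x, asc q a b 0 x ∂μ = ρ^(m+1) * qHermite q (m+1) y := by
        have : ∫ x, asc q a b 0 x ∂μ = 1 := by
          rw [show (fun x => asc q a b 0 x) = fun _ : ℝ => (1:ℝ) from rfl]
          simp
        rw [this, mul_one]
        simp [Cc, qb_zero_right]
      rw [Finset.sum_range_succ (fun k => Cc q ρ y (m+1) (k+1) * ∫ x, asc q a b (k+1) x ∂μ) m] at key
      have hz : ∑ k ∈ Finset.range m, Cc q ρ y (m+1) (k+1) * ∫ x, asc q a b (k+1) x ∂μ = 0 := by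
        refine Finset.sum_eq_zero fun k hk => ?_
        rw [ih (k+1) (by simp at hk; omega) (by omega), mul_zero]
      have hd : Cc q ρ y (m+1) (m+1) = 1 := by
        simp [Cc, qb_self, show qHermite q 0 y = 1 from rfl]
      rw [hz, hd, h0, zero_add, one_mul] at key
      linarith
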